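/- Let n ≥ 3 and k ≥ 0, and let G_n^k be the graph of critical pairs of the crown S_n^k. Then the independence number of G_n^k equals (k+1)(k+2)/2, and consequently the chromatic number of G_n^k is at least ⌈2(n+k)/(k+2)⌉. -/

import Mathlib

namespace CrownPaper

/-- Indices of the crown `S_n^k` live in `ZMod (n+k)`. The minimal element `a_i` is
incomparable to the maximal element `b_j` iff `(j - i) mod (n+k) ≤ k`. -/
def Incomp (n k : ℕ) (i j : ZMod (n + k)) : Prop := (j - i).val ≤ k

/-- `a_i < b_j` in the crown `S_n^k` iff `(j - i) mod (n+k) > k`. -/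
def CompLt (n k : ℕ) (i j : ZMod (n + k)) : Prop := k < (j - i).val

/-- A pair `(a_i, b_j)` is recorded as its pair of indices. -/
abbrev Pair (n k : ℕ) := ZMod (n + k) × ZMod (n + k)

/-- `(a_i, b_j)` is an incomparable (critical) pair. -/
def IsIncPair (n k : ℕ) (p : Pair n k) : Prop := Incomp n k p.1 p.2

/-- Adjacency in the graph `G_n^k` of critical pairs: `(a_i,b_j)` and `(a_p,b_q)` are
adjacent iff `a_i < b_q` and `a_p < b_j` in `S_n^k`. -/
def Adj (n k : ℕ) (p q : Pair n k) : Prop :=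
  CompLt n k p.1 q.2 ∧ CompLt n k q.1 p.2

/-- An independent set of critical pairs in `G_n^k`. -/
def Indep (n k : ℕ) (S : Set (Pair n k)) : Prop :=
  (∀ p ∈ S, IsIncPair n k p) ∧ ∀ p ∈ S, ∀ q ∈ S, ¬ Adj n k p q

/-- A set of pairs is reversible when some linear extension of the crown (encoded as an
injective map into `ℕ` on the disjoint union `A ⊕ B` preserving all strict comparabilities
`a_i < b_j`) puts `a` above `b` for every pair `(a,b)` of the set. -/
def Reversible (n k : ℕ) (S : Set (Pair n k)) : Prop :=
  ∃ f : (ZMod (n + k)) ⊕ (ZMod (n + k)) → ℕ,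
    Function.Injective f ∧
    (∀ i j : ZMod (n + k), CompLt n k i j → f (Sum.inl i) < f (Sum.inr j)) ∧
    ∀ p ∈ S, f (Sum.inr p.2) < f (Sum.inl p.1)

/-- The graph `G_n^k` of critical pairs of the crown `S_n^k`, as a simple graph on the
incomparable pairs. -/
def CrownGraph (n k : ℕ) : SimpleGraph {p : Pair n k // IsIncPair n k p} where
  Adj p q := CompLt n k p.1.1 q.1.2 ∧ CompLt n k q.1.1 p.1.2
  symm := by constructor; intro p q h; exact ⟨h.2, h.1⟩
  loopless := by constructor; intro p h; exact absurd h.1 (not_lt.mpr p.2)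


lemma zmod_val_inj {m : ℕ} [NeZero m] {x y : ZMod m} (h : x.val = y.val) : x = y := by
  have hx := ZMod.natCast_zmod_val x
  have hy := ZMod.natCast_zmod_val y
  rw [← hx, ← hy, h]

lemma window {m k : ℕ} [NeZero m] (hm : k + 2 ≤ m) :
    ∀ (s : ℕ) (A B : Finset (ZMod m)), A.card ≤ s → A.Nonempty → B.Nonempty →
      (∀ a ∈ A, ∀ b ∈ B, (b - a).val ≤ k) → B.card + A.card ≤ k + 2 := by
  intro s
  induction s with
  | zero =>
    intro A B hcard hA
    exact absurd (le_antisymm hcard (Nat.zero_le _)) (Finset.card_pos.mpr hA).ne'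
  | succ s ih =>
    intro A B hcard hA hB hcond
    by_cases h1 : A.card = 1
    · obtain ⟨a0, rfl⟩ := Finset.card_eq_one.mp h1
      have hcardim : (B.image (fun b => (b - a0).val)).card = B.card := by
        apply Finset.card_image_of_injOn
        intro b hb b' hb' h
        have h2 : b - a0 = b' - a0 := zmod_val_inj h
        exact sub_left_inj.mp h2
      have hsub : (B.image fun b => (b - a0).val) ⊆ Finset.range (k+1) := by
        intro v hv
        simp only [Finset.mem_image] at hv
        obtain ⟨b, hb, rfl⟩ := hv
        exact Finset.mem_range.mpr (Nat.lt_succ_of_le (hcond a0 (Finset.mem_singleton_self a0) b hb))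
      have hle := Finset.card_le_card hsub
      rw [hcardim, Finset.card_range] at hle
      simp only [Finset.card_singleton]
      omega
    · have h2 : 2 ≤ A.card := by
        have := Finset.card_pos.mpr hA; omega
      obtain ⟨x, hx⟩ := hB
      obtain ⟨a0, ha0, hmin⟩ := Finset.exists_min_image A (fun a => (x - a).val) hA
      set b' := a0 - 1 with hb'def
      have hkey : ∀ a ∈ A, a ≠ a0 → (b' - a).val ≤ k := by
        intro a ha hne
        have hax : (x - a).val ≤ k := hcond a ha x hx
        have hmin' : (x - a0).val ≤ (x - a).val := hmin a ha
        set α := (x - a).val with hα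
        set β := (x - a0).val with hβ
        have h1' : x - a = (α : ZMod m) := (ZMod.natCast_zmod_val _).symm
        have h2' : x - a0 = (β : ZMod m) := (ZMod.natCast_zmod_val _).symm
        have hβα : β ≠ α := by
          intro h
          apply hne
          have hxa : x - a = x - a0 := by rw [h1', h2', h]
          exact (sub_right_inj.mp hxa)
        have hlt : β < α := lt_of_le_of_ne hmin' hβα
        have h3 : a0 - a = ((α - β : ℕ) : ZMod m) := by
          have hr : a0 - a = (x - a) - (x - a0) := by ring
          rw [hr, h1', h2', Nat.cast_sub (le_of_lt hlt)]
        have h4 : b' - a = ((α - β - 1 : ℕ) : ZMod m) := by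
          have hr : b' - a = (a0 - a) - 1 := by rw [hb'def]; ring
          rw [hr, h3, Nat.cast_sub (by omega : 1 ≤ α - β)]
          push_cast
          ring
        rw [h4, ZMod.val_cast_of_lt (by omega : α - β - 1 < m)]
        omega
      have hb'B : b' ∉ B := by
        intro hmem
        have hc := hcond a0 ha0 b' hmem
        have hcalc : b' - a0 = ((m - 1 : ℕ) : ZMod m) := by
          rw [Nat.cast_sub (by omega : 1 ≤ m), ZMod.natCast_self]
          push_cast
          rw [hb'def]
          ring
        rw [hcalc, ZMod.val_cast_of_lt (by omega : m - 1 < m)] at hc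
        omega
      have ha0A : a0 ∉ A.erase a0 := Finset.notMem_erase _ _
      have herase_card : (A.erase a0).card = A.card - 1 := Finset.card_erase_of_mem ha0
      have happ := ih (A.erase a0) (insert b' B) (by omega)
        (Finset.card_pos.mp (by omega))
        ⟨x, Finset.mem_insert_of_mem hx⟩
        (by
          intro a ha b hb
          have ha' : a ∈ A := Finset.mem_of_mem_erase ha
          have hane : a ≠ a0 := Finset.ne_of_mem_erase ha
          rcases Finset.mem_insert.mp hb with rfl | hbB
          · exact hkey a ha' hane
          · exact hcond a ha' b hbB)
      rw [Finset.card_insert_of_notMem hb'B, herase_card] at happ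
      omega

theorem key {m k : ℕ} [NeZero m] (hm : k + 3 ≤ m) (F : Finset (ZMod m × ZMod m))
    (hF : ∀ p ∈ F, ∀ q ∈ F, (q.2 - p.1).val ≤ k ∨ (p.2 - q.1).val ≤ k) :
    2 * F.card ≤ (k+1)*(k+2) := by
  classical
  set I := F.image Prod.fst with hI
  set E : ZMod m → Finset (ZMod m) :=
    fun i => (F.filter (fun p => p.1 = i)).image Prod.snd with hE
  set D : ZMod m → Finset (ZMod m) :=
    fun i => I.filter (fun i' => i' ≠ i ∧ ∀ j ∈ E i, (j - i').val ≤ k) with hD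
  have hfib : F.card = ∑ i ∈ I, (F.filter (fun p => p.1 = i)).card :=
    Finset.card_eq_sum_card_fiberwise (fun p hp => Finset.mem_image_of_mem _ hp)
  have hEcard : ∀ i, (E i).card = (F.filter (fun p => p.1 = i)).card := by
    intro i
    apply Finset.card_image_of_injOn
    intro p hp q hq h
    simp only [Finset.mem_coe, Finset.mem_filter] at hp hq
    exact Prod.ext (hp.2.trans hq.2.symm) h
  -- membership facts
  have hmemE : ∀ i j, j ∈ E i ↔ (i, j) ∈ F := by
    intro i j
    simp only [hE, Finset.mem_image, Finset.mem_filter]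
    constructor
    · rintro ⟨p, ⟨hpF, hp1⟩, hp2⟩
      rwa [← hp1, ← hp2, Prod.mk.eta]
    · intro h; exact ⟨(i, j), ⟨h, rfl⟩, rfl⟩
  -- each group's own window
  have hself : ∀ i, ∀ j ∈ E i, (j - i).val ≤ k := by
    intro i j hj
    have := hF (i, j) ((hmemE i j).mp hj) (i, j) ((hmemE i j).mp hj)
    simpa using this
  -- group bound via window lemma
  have hgroup : ∀ i ∈ I, (E i).card + (D i).card + 1 ≤ k + 2 := by
    intro i hi
    have hiD : i ∉ D i := by simp [hD]
    have hins : (insert i (D i)).card = (D i).card + 1 :=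
      Finset.card_insert_of_notMem hiD
    have hEne : (E i).Nonempty := by
      simp only [hI, Finset.mem_image] at hi
      obtain ⟨p, hpF, hp1⟩ := hi
      exact ⟨p.2, (hmemE i p.2).mpr (by rwa [← hp1, Prod.mk.eta])⟩
    have := window (m := m) (k := k) (by omega) (insert i (D i)).card
      (insert i (D i)) (E i) le_rfl ⟨i, Finset.mem_insert_self _ _⟩ hEne
      (by
        intro a ha b hb
        rcases Finset.mem_insert.mp ha with rfl | haD
        · exact hself a b hb
        · simp only [hD, Finset.mem_filter] at haD
          exact haD.2.2 b hb)
    omega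
  -- pair resolution
  have hpair : ∀ i ∈ I, ∀ i' ∈ I, i ≠ i' → i' ∈ D i ∨ i ∈ D i' := by
    intro i hi i' hi' hne
    by_contra hcon
    push_neg at hcon
    obtain ⟨h1, h2⟩ := hcon
    simp only [hD, Finset.mem_filter, not_and, not_forall] at h1 h2
    obtain ⟨j, hj, hjk⟩ := h1 hi' (Ne.symm hne)
    obtain ⟨j', hj', hjk'⟩ := h2 hi hne
    have := hF (i, j) ((hmemE i j).mp hj) (i', j') ((hmemE i' j').mp hj')
    simp only at this
    omega
  -- double counting pairs
  set P : Finset (ZMod m × ZMod m) := I.offDiag.filter (fun z => z.2 ∈ D z.1) with hP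
  have hPsub : ∀ z ∈ P, z.1 ∈ I := by
    intro z hz
    simp only [hP, Finset.mem_filter, Finset.mem_offDiag] at hz
    exact hz.1.1
  have hPcard : P.card = ∑ i ∈ I, (D i).card := by
    rw [Finset.card_eq_sum_card_fiberwise (f := Prod.fst) hPsub]
    apply Finset.sum_congr rfl
    intro i hi
    have : P.filter (fun z => z.1 = i) = (D i).image (fun j => (i, j)) := by
      ext z
      simp only [hP, Finset.mem_filter, Finset.mem_offDiag, Finset.mem_image]
      constructor
      · rintro ⟨⟨⟨h1, h2, h3⟩, h4⟩, h5⟩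
        exact ⟨z.2, by rwa [← h5], by rw [← h5, Prod.mk.eta]⟩
      · rintro ⟨j, hjD, rfl⟩
        obtain ⟨hjI, hjne, -⟩ : j ∈ I ∧ ¬j = i ∧ ∀ j' ∈ E i, (j' - j).val ≤ k := by
          simpa [hD] using hjD
        exact ⟨⟨⟨hi, hjI, fun h => hjne h.symm⟩, hjD⟩, rfl⟩
    rw [this]
    apply Finset.card_image_of_injOn
    intro a _ b _ h
    exact (Prod.mk.injEq _ _ _ _).mp h |>.2
  have hcover : I.offDiag ⊆ P ∪ P.image Prod.swap := by
    intro z hz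
    have hz' := Finset.mem_offDiag.mp hz
    rcases hpair z.1 hz'.1 z.2 hz'.2.1 hz'.2.2 with h | h
    · exact Finset.mem_union_left _ (Finset.mem_filter.mpr ⟨hz, h⟩)
    · apply Finset.mem_union_right
      refine Finset.mem_image.mpr ⟨(z.2, z.1), ?_, rfl⟩
      refine Finset.mem_filter.mpr ⟨?_, h⟩
      exact Finset.mem_offDiag.mpr ⟨hz'.2.1, hz'.1, Ne.symm hz'.2.2⟩
  have hcovercard : I.card * I.card - I.card ≤ 2 * P.card := by
    have h1 := Finset.card_le_card hcover
    have h2 := Finset.card_union_le P (P.image Prod.swap)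
    have h3 := Finset.card_image_le (s := P) (f := Prod.swap)
    rw [Finset.offDiag_card] at h1
    omega
  -- sum up
  have hsum : F.card + P.card ≤ I.card * (k + 1) := by
    rw [hfib, hPcard, ← Finset.sum_add_distrib]
    have : ∀ i ∈ I, (F.filter (fun p => p.1 = i)).card + (D i).card ≤ k + 1 := by
      intro i hi
      have := hgroup i hi
      rw [hEcard] at this
      omega
    calc ∑ i ∈ I, ((F.filter (fun p => p.1 = i)).card + (D i).card)
        ≤ ∑ i ∈ I, (k+1) := Finset.sum_le_sum this
      _ = I.card * (k+1) := by rw [Finset.sum_const, smul_eq_mul]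
  -- final arithmetic
  set r := I.card with hr
  have hrr : r ≤ r * r := by nlinarith
  have hzcover : (r : ℤ) * r - r ≤ 2 * P.card := by
    have := hcovercard
    zify at this
    omega
  have hzsum : (F.card : ℤ) + P.card ≤ r * (k + 1) := by exact_mod_cast hsum
  have hgoal : (2 : ℤ) * F.card ≤ (k+1)*(k+2) := by
    rcases le_or_gt (r : ℤ) (k+1) with h | h
    · have hnn : (0:ℤ) ≤ ((k:ℤ)+1-r) * ((k:ℤ)+2-r) :=
        mul_nonneg (by linarith) (by linarith)
      nlinarith
    · have hr2 : (k:ℤ) + 2 ≤ r := by omega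
      have hnn : (0:ℤ) ≤ ((r:ℤ)-(k+1)) * ((r:ℤ)-(k+2)) :=
        mul_nonneg (by linarith) (by linarith)
      nlinarith
  exact_mod_cast hgoal

-- canonical independent set
theorem part1 (n k : ℕ) (hn : 3 ≤ n) :
    ∃ S : Set {p : Pair n k // IsIncPair n k p},
      (∀ p ∈ S, ∀ q ∈ S, ¬ (CrownGraph n k).Adj p q) ∧
      S.ncard = (k + 1) * (k + 2) / 2 := by
  classical
  haveI : NeZero (n + k) := ⟨by omega⟩
  set m := n + k with hm
  have hkm : k < m := by omega
  -- the domain triangle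
  set dom : Finset ((_ : ℕ) × ℕ) := (Finset.range (k+1)).sigma (fun b => Finset.range (b+1))
    with hdom
  have hdommem : ∀ z : (_ : ℕ) × ℕ, z ∈ dom ↔ z.1 ≤ k ∧ z.2 ≤ z.1 := by
    intro z
    simp [hdom, Finset.mem_sigma, Nat.lt_succ_iff]
  have hdomcard : dom.card * 2 = (k+1)*(k+2) := by
    rw [hdom, Finset.card_sigma]
    simp only [Finset.card_range]
    have h1 := Finset.sum_range_id_mul_two (k+2)
    have h2 : (∑ i ∈ Finset.range (k + 2), i) = ∑ b ∈ Finset.range (k+1), (b+1) := by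
      rw [Finset.sum_range_succ' (fun i => i) (k+1)]
      simp
    rw [h2] at h1
    rw [h1]
    have : k + 2 - 1 = k + 1 := by omega
    rw [this]
    ring
  set f : ((_ : ℕ) × ℕ) → Pair n k := fun z => ((z.2 : ZMod m), (z.1 : ZMod m)) with hf
  set CF : Finset (Pair n k) := dom.image f with hCF
  have hCFcard : CF.card = dom.card := by
    apply Finset.card_image_of_injOn
    intro z hz w hw h
    rw [Finset.mem_coe, hdommem] at hz hw
    have h1 : ((z.2 : ZMod m)) = (w.2 : ZMod m) := congrArg Prod.fst h
    have h2 : ((z.1 : ZMod m)) = (w.1 : ZMod m) := congrArg Prod.snd h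
    have e1 : z.2 = w.2 := by
      have := congrArg ZMod.val h1
      rwa [ZMod.val_cast_of_lt (by omega), ZMod.val_cast_of_lt (by omega)] at this
    have e2 : z.1 = w.1 := by
      have := congrArg ZMod.val h2
      rwa [ZMod.val_cast_of_lt (by omega), ZMod.val_cast_of_lt (by omega)] at this
    exact Sigma.ext e2 (heq_of_eq e1)
  -- incomparability of canonical pairs
  have hinc : ∀ p ∈ CF, IsIncPair n k p := by
    intro p hp
    rw [hCF, Finset.mem_image] at hp
    obtain ⟨z, hz, rfl⟩ := hp
    rw [hdommem] at hz
    show ((z.1 : ZMod m) - (z.2 : ZMod m)).val ≤ k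
    rw [← Nat.cast_sub hz.2, ZMod.val_cast_of_lt (by omega)]
    omega
  refine ⟨{p | (p : Pair n k) ∈ CF}, ?_, ?_⟩
  · -- independence
    rintro ⟨p, hpinc⟩ hp ⟨q, hqinc⟩ hq ⟨h1, h2⟩
    simp only [Set.mem_setOf_eq] at hp hq
    rw [hCF, Finset.mem_image] at hp hq
    obtain ⟨z, hz, hpz⟩ := hp
    obtain ⟨w, hw, hqw⟩ := hq
    rw [hdommem] at hz hw
    -- h1 : CompLt n k p.1 q.2, h2 : CompLt n k q.1 p.2
    have hp1 : p.1 = (z.2 : ZMod m) := by rw [← hpz]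
    have hp2 : p.2 = (z.1 : ZMod m) := by rw [← hpz]
    have hq1 : q.1 = (w.2 : ZMod m) := by rw [← hqw]
    have hq2 : q.2 = (w.1 : ZMod m) := by rw [← hqw]
    have key1 : w.1 < z.2 := by
      by_contra hle
      push_neg at hle
      have : ((w.1 : ZMod m) - (z.2 : ZMod m)).val ≤ k := by
        rw [← Nat.cast_sub hle, ZMod.val_cast_of_lt (by omega)]
        omega
      rw [CompLt, hp1, hq2] at h1
      omega
    have key2 : z.1 < w.2 := by
      by_contra hle
      push_neg at hle
      have : ((z.1 : ZMod m) - (w.2 : ZMod m)).val ≤ k := by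
        rw [← Nat.cast_sub hle, ZMod.val_cast_of_lt (by omega)]
        omega
      rw [CompLt, hq1, hp2] at h2
      omega
    omega
  · -- cardinality
    have himg : Subtype.val '' {p : {p : Pair n k // IsIncPair n k p} | (p : Pair n k) ∈ CF}
        = (CF : Set (Pair n k)) := by
      ext p
      simp only [Set.mem_image, Set.mem_setOf_eq, Finset.mem_coe]
      constructor
      · rintro ⟨q, hq, rfl⟩; exact hq
      · intro hp; exact ⟨⟨p, hinc p hp⟩, hp, rfl⟩
    have := Set.ncard_image_of_injective
      {p : {p : Pair n k // IsIncPair n k p} | (p : Pair n k) ∈ CF} Subtype.val_injective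
    rw [himg, Set.ncard_coe_finset, hCFcard] at this
    omega

instance (n k : ℕ) : DecidablePred (IsIncPair n k) := fun p =>
  inferInstanceAs (Decidable ((p.2 - p.1).val ≤ k))

open Finset

theorem part2 (n k : ℕ) (hn : 3 ≤ n) (S : Set {p : Pair n k // IsIncPair n k p})
    (hS : ∀ p ∈ S, ∀ q ∈ S, ¬ (CrownGraph n k).Adj p q) :
    S.ncard ≤ (k + 1) * (k + 2) / 2 := by
  classical
  haveI : NeZero (n + k) := ⟨by omega⟩
  have hfin : S.Finite := Set.toFinite S
  set F : Finset (Pair n k) := hfin.toFinset.image Subtype.val with hF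
  have hFcard : F.card = S.ncard := by
    rw [hF, Finset.card_image_of_injective _ Subtype.val_injective,
      Set.ncard_eq_toFinset_card S hfin]
  have hhyp : ∀ p ∈ F, ∀ q ∈ F, (q.2 - p.1).val ≤ k ∨ (p.2 - q.1).val ≤ k := by
    intro p hp q hq
    obtain ⟨p', hp', rfl⟩ := Finset.mem_image.mp hp
    obtain ⟨q', hq', rfl⟩ := Finset.mem_image.mp hq
    have hna := hS p' (hfin.mem_toFinset.mp hp') q' (hfin.mem_toFinset.mp hq')
    by_contra hcon
    push_neg at hcon
    exact hna ⟨hcon.1, hcon.2⟩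
  have hk := key (m := n + k) (k := k) (by omega) F hhyp
  have h2 : 2 * S.ncard ≤ (k+1)*(k+2) := by omega
  set X := (k+1)*(k+2) with hX
  omega

theorem cardV (n k : ℕ) [NeZero (n + k)] (hn : 3 ≤ n) :
    Fintype.card {p : Pair n k // IsIncPair n k p} = (n + k) * (k + 1) := by
  classical
  set m := n + k with hm
  have hkm : k < m := by omega
  rw [Fintype.card_subtype]
  rw [Finset.card_eq_sum_card_fiberwise
    (f := Prod.fst) (t := (univ : Finset (ZMod m))) (fun x _ => Finset.mem_univ _)]
  have hfib : ∀ i : ZMod m,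
      ((univ.filter (fun p : Pair n k => IsIncPair n k p)).filter
        (fun p => p.1 = i)).card = k + 1 := by
    intro i
    rw [← Finset.card_range (k+1)]
    apply Finset.card_bij (fun p _ => (p.2 - p.1).val)
    · intro p hp
      simp only [Finset.mem_filter, Finset.mem_univ, true_and] at hp
      exact Finset.mem_range.mpr (Nat.lt_succ_of_le hp.1)
    · intro p hp q hq h
      simp only [Finset.mem_filter, Finset.mem_univ, true_and] at hp hq
      have h1 : p.2 - p.1 = q.2 - q.1 := by
        have e1 := ZMod.natCast_zmod_val (p.2 - p.1)
        have e2 := ZMod.natCast_zmod_val (q.2 - q.1)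
        rw [← e1, ← e2, h]
      have h2 : p.1 = q.1 := hp.2.trans hq.2.symm
      have h3 : p.2 = q.2 := by
        have := congrArg (· + p.1) h1
        simpa [h2, sub_add_cancel] using this
      exact Prod.ext h2 h3
    · intro o ho
      refine ⟨(i, i + (o : ZMod m)), ?_, ?_⟩
      · simp only [Finset.mem_filter, Finset.mem_univ, true_and]
        constructor
        · show ((i + (o : ZMod m)) - i).val ≤ k
          rw [add_sub_cancel_left, ZMod.val_cast_of_lt (by
            have := Finset.mem_range.mp ho; omega)]
          have := Finset.mem_range.mp ho; omega
        · trivial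
      · show ((i + (o : ZMod m)) - i).val = o
        rw [add_sub_cancel_left, ZMod.val_cast_of_lt (by
          have := Finset.mem_range.mp ho; omega)]
  calc ∑ i : ZMod m, ((univ.filter (fun p : Pair n k => IsIncPair n k p)).filter
        (fun p => p.1 = i)).card
      = ∑ _i : ZMod m, (k+1) := Finset.sum_congr rfl (fun i _ => hfib i)
    _ = m * (k+1) := by
        rw [Finset.sum_const, smul_eq_mul, Finset.card_univ, ZMod.card]

theorem part3 (n k : ℕ) (hn : 3 ≤ n) :
    (((2 * (n + k) + k + 1) / (k + 2) : ℕ) : ℕ∞) ≤ (CrownGraph n k).chromaticNumber := by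
  classical
  haveI : NeZero (n + k) := ⟨by omega⟩
  rw [SimpleGraph.chromaticNumber_eq_biInf]
  refine le_iInf fun c => le_iInf fun hc => ?_
  obtain ⟨C⟩ := (hc : (CrownGraph n k).Colorable c)
  have hsum := Finset.card_eq_sum_card_fiberwise
    (s := (univ : Finset {p : Pair n k // IsIncPair n k p}))
    (t := (univ : Finset (Fin c))) (f := fun v => C v) (fun v _ => Finset.mem_univ _)
  have hbound : ∀ x : Fin c,
      (univ.filter (fun v => C v = x)).card ≤ (k+1)*(k+2)/2 := by
    intro x
    have hind : ∀ p ∈ (↑(univ.filter (fun v => C v = x)) :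
        Set {p : Pair n k // IsIncPair n k p}),
        ∀ q ∈ (↑(univ.filter (fun v => C v = x)) :
        Set {p : Pair n k // IsIncPair n k p}), ¬ (CrownGraph n k).Adj p q := by
      intro p hp q hq hadj
      simp only [Finset.coe_filter, Set.mem_setOf_eq] at hp hq
      exact C.valid hadj (hp.2.trans hq.2.symm)
    have := part2 n k hn _ hind
    rwa [Set.ncard_coe_finset] at this
  have h1 : (n+k)*(k+1) ≤ c * ((k+1)*(k+2)/2) := by
    calc (n+k)*(k+1) = Fintype.card {p : Pair n k // IsIncPair n k p} :=
          (cardV n k hn).symm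
      _ = (univ : Finset {p : Pair n k // IsIncPair n k p}).card :=
          Finset.card_univ.symm
      _ = ∑ x : Fin c, (univ.filter (fun v => C v = x)).card := hsum
      _ ≤ ∑ _x : Fin c, (k+1)*(k+2)/2 :=
          Finset.sum_le_sum (fun x _ => hbound x)
      _ = c * ((k+1)*(k+2)/2) := by
          rw [Finset.sum_const, smul_eq_mul, Finset.card_univ, Fintype.card_fin]
  have h2T : ((k+1)*(k+2)/2) * 2 = (k+1)*(k+2) :=
    Nat.div_mul_cancel (Even.two_dvd (Nat.even_mul_succ_self (k+1)))
  have h3 : (2*(n+k))*(k+1) ≤ (c*(k+2))*(k+1) := by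
    calc (2*(n+k))*(k+1) = (n+k)*(k+1)*2 := by ring
      _ ≤ c*((k+1)*(k+2)/2)*2 := Nat.mul_le_mul_right 2 h1
      _ = c*(((k+1)*(k+2)/2)*2) := by ring
      _ = c*((k+1)*(k+2)) := by rw [h2T]
      _ = (c*(k+2))*(k+1) := by ring
  have h4 : 2*(n+k) ≤ c*(k+2) := Nat.le_of_mul_le_mul_right h3 (by omega)
  have h5 : (2*(n+k)+k+1)/(k+2) ≤ c := by
    have hexp : (c+1)*(k+2) = c*(k+2)+(k+2) := by ring
    have hlt : 2*(n+k)+k+1 < (c+1)*(k+2) := by omega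
    have := (Nat.div_lt_iff_lt_mul (by omega : 0 < k+2)).mpr hlt
    omega
  exact_mod_cast Nat.cast_le.mpr h5

/-- the independence number of `G_n^k` equals `(k+1)(k+2)/2`, and
consequently its chromatic number is at least `⌈2(n+k)/(k+2)⌉`. -/
theorem indepNum_and_chromatic (n k : ℕ) (hn : 3 ≤ n) :
    (∃ S : Set {p : Pair n k // IsIncPair n k p},
      (∀ p ∈ S, ∀ q ∈ S, ¬ (CrownGraph n k).Adj p q) ∧
      S.ncard = (k + 1) * (k + 2) / 2) ∧
    (∀ S : Set {p : Pair n k // IsIncPair n k p},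
      (∀ p ∈ S, ∀ q ∈ S, ¬ (CrownGraph n k).Adj p q) →
      S.ncard ≤ (k + 1) * (k + 2) / 2) ∧
    (((2 * (n + k) + k + 1) / (k + 2) : ℕ) : ℕ∞) ≤ (CrownGraph n k).chromaticNumber := by
  haveI : NeZero (n + k) := ⟨by omega⟩
  exact ⟨part1 n k hn, fun S hS => part2 n k hn S hS, part3 n k hn⟩

end CrownPaper
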